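/- (Core construction in part (ii) of Proposition 3.) Let D > 0, let n ≥ 1, let {1,…,n} be partitioned into a set I of imported substrates and a set E of exported substrates, and let S̄ ∈ ℝ^n with S̄_i ≥ 0 for all i. Let X* ≥ 0, S* ∈ ℝ^n with S*_i ≥ 0, T ∈ ℝ^n with T_i ≥ 0, ν ∈ ℝ^n, and V_i > 0, K_i > 0 for i ∈ I. Assume: for every i ∈ {1,…,n}, D(S̄_i − S*_i) = X* ν_i; for every i ∈ I, 0 ≤ D(S̄_i − S*_i) ≤ X* (V_i S*_i/(K_i + S*_i)) T_i; and for every i ∈ E, ν_i ≤ 0. Then for every real X with 0 ≤ X ≤ X*, the vector S ∈ ℝ^n defined by S_i = S̄_i − (X/D) ν_i satisfies: (a) D(S̄_i − S_i) = X ν_i for all i; (b) S_i ≥ S*_i ≥ 0 for all i ∈ I; (c) S_i ≥ S̄_i ≥ 0 for all i ∈ E; and (d) 0 ≤ D(S̄_i − S_i) ≤ X (V_i S_i/(K_i + S_i)) T_i for all i ∈ I. -/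

import Mathlib

/-- Core construction in part (ii) of Proposition 3: given a solution at
population X*, the medium concentrations S defined by
S_i = S̄_i − (X/D) ν_i yield a solution at any population 0 ≤ X ≤ X*. -/
theorem chemostat_rba_scale_down_construction
    (D : ℝ) (hD : 0 < D) (n : ℕ) (hn : 1 ≤ n)
    (I E : Set (Fin n)) (hunion : I ∪ E = Set.univ) (hdisj : I ∩ E = ∅)
    (Sbar Sstar T ν V K : Fin n → ℝ) (Xstar : ℝ) (hXstar : 0 ≤ Xstar)
    (hSbar : ∀ i, 0 ≤ Sbar i) (hSstar : ∀ i, 0 ≤ Sstar i)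
    (hT : ∀ i, 0 ≤ T i)
    (hV : ∀ i ∈ I, 0 < V i) (hK : ∀ i ∈ I, 0 < K i)
    (heq : ∀ i, D * (Sbar i - Sstar i) = Xstar * ν i)
    (himp : ∀ i ∈ I, 0 ≤ D * (Sbar i - Sstar i) ∧
      D * (Sbar i - Sstar i) ≤ Xstar * (V i * Sstar i / (K i + Sstar i)) * T i)
    (hexp : ∀ i ∈ E, ν i ≤ 0)
    (X : ℝ) (hX0 : 0 ≤ X) (hXle : X ≤ Xstar) :
    let S : Fin n → ℝ := fun i => Sbar i - (X / D) * ν i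
    (∀ i, D * (Sbar i - S i) = X * ν i) ∧
    (∀ i ∈ I, Sstar i ≤ S i ∧ 0 ≤ Sstar i) ∧
    (∀ i ∈ E, Sbar i ≤ S i ∧ 0 ≤ Sbar i) ∧
    (∀ i ∈ I, 0 ≤ D * (Sbar i - S i) ∧
      D * (Sbar i - S i) ≤ X * (V i * S i / (K i + S i)) * T i) := by
  intro S
  have hDne : D ≠ 0 := ne_of_gt hD
  have hSeq : ∀ i, D * (Sbar i - S i) = X * ν i := by
    intro i
    show D * (Sbar i - (Sbar i - (X / D) * ν i)) = X * ν i
    field_simp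
    ring
  have hstar : ∀ i, Sstar i = Sbar i - (Xstar / D) * ν i := by
    intro i
    have h := heq i
    field_simp
    nlinarith [heq i]
  have hnuI : ∀ i ∈ I, 0 ≤ ν i ∨ X = Xstar := by
    intro i hi
    rcases eq_or_lt_of_le hXstar with h | h
    · right; linarith
    · left
      have h1 := (himp i hi).1
      rw [heq i] at h1
      exact nonneg_of_mul_nonneg_right h1 h
  have hSge : ∀ i ∈ I, Sstar i ≤ S i := by
    intro i hi
    rcases hnuI i hi with h | h
    · show Sstar i ≤ Sbar i - (X / D) * ν i
      rw [hstar i]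
      have : X / D * ν i ≤ Xstar / D * ν i := by
        apply mul_le_mul_of_nonneg_right _ h
        exact div_le_div_of_nonneg_right hXle hD.le  -- maybe wrong name
      linarith
    · show Sstar i ≤ Sbar i - (X / D) * ν i
      rw [hstar i, h]
  have hmono : ∀ i ∈ I, V i * Sstar i / (K i + Sstar i) ≤ V i * S i / (K i + S i) := by
    intro i hi
    have hK' := hK i hi
    have hV' := hV i hi
    have hS0 := hSstar i
    have hge := hSge i hi
    rw [div_le_div_iff₀ (by linarith) (by linarith)]
    nlinarith [mul_le_mul_of_nonneg_left hge (mul_nonneg hV'.le hK'.le)]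
  refine ⟨hSeq, ?_, ?_, ?_⟩
  · exact fun i hi => ⟨hSge i hi, hSstar i⟩
  · intro i hi
    refine ⟨?_, hSbar i⟩
    show Sbar i ≤ Sbar i - (X / D) * ν i
    have : X / D * ν i ≤ 0 :=
      mul_nonpos_of_nonneg_of_nonpos (div_nonneg hX0 hD.le) (hexp i hi)
    linarith
  · intro i hi
    have hnu : 0 ≤ ν i ∨ X = Xstar := hnuI i hi
    have hnu' : 0 ≤ X * ν i := by
      rcases hnu with h | h
      · exact mul_nonneg hX0 h
      · rw [h, ← heq i]; exact (himp i hi).1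
    constructor
    · rw [hSeq i]; exact hnu'
    · rw [hSeq i]
      have h2 := (himp i hi).2
      rw [heq i] at h2
      have hstep : X * ν i ≤ X * (V i * Sstar i / (K i + Sstar i)) * T i := by
        rcases eq_or_lt_of_le hXstar with h | hXpos
        · have hX : X = 0 := le_antisymm (by linarith) hX0
          simp [hX]
        · have hnuB : ν i ≤ V i * Sstar i / (K i + Sstar i) * T i := by
            have := h2
            rw [mul_assoc] at this
            exact le_of_mul_le_mul_left this hXpos
          calc X * ν i ≤ X * (V i * Sstar i / (K i + Sstar i) * T i) :=
                mul_le_mul_of_nonneg_left hnuB hX0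
            _ = X * (V i * Sstar i / (K i + Sstar i)) * T i := by ring
      refine hstep.trans ?_
      have := hmono i hi
      have hT' := hT i
      exact mul_le_mul_of_nonneg_right (mul_le_mul_of_nonneg_left this hX0) hT'
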